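/- Let p be a prime, r ≥ 1, and 0 ≤ i ≤ r. Let Z, S, W be random variables on a finite probability space, with Z and W taking values in Z_{p^r}, S taking values in a finite set 𝒮, and W taking values in p^i·Z_{p^r} almost surely. Suppose the pair (Z + W, S) has the same joint distribution as (Z, S), where addition is in Z_{p^r}. Then H(W | Z, S) ≤ H(Z | S) − H([Z]_i | S). -/

import Mathlib

open scoped Classical

noncomputable section

/-- Base-2 Shannon entropy of a probability mass function on a finite type
(with the convention `0 · log 0 = 0`, automatic since `Real.logb 2 0 = 0`). -/
def ent {A : Type*} [Fintype A] (P : A → ℝ) : ℝ :=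
  -∑ a, P a * Real.logb 2 (P a)

/-- Distribution (pushforward pmf) of a random variable `X` on a finite
probability space with weights `μ`. -/
def distOf {Ω A : Type*} [Fintype Ω] (μ : Ω → ℝ) (X : Ω → A) : A → ℝ :=
  fun a => ∑ ω, if X ω = a then μ ω else 0

/-- Entropy `H(X)` of a random variable `X` on a finite probability space. -/
def Hent {Ω A : Type*} [Fintype Ω] [Fintype A] (μ : Ω → ℝ) (X : Ω → A) : ℝ :=
  ent (distOf μ X)

/-- Conditional entropy `H(X | Y) = H(X,Y) − H(Y)`. -/
def condEnt {Ω A B : Type*} [Fintype Ω] [Fintype A] [Fintype B]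
    (μ : Ω → ℝ) (X : Ω → A) (Y : Ω → B) : ℝ :=
  Hent μ (fun ω => (X ω, Y ω)) - Hent μ Y

/-- The additive subgroup `p^i · Z_{p^r} = {p^i * x : x ∈ Z_{p^r}}` of `Z_{p^r}`. -/
def pZ (p r i : ℕ) : AddSubgroup (ZMod (p ^ r)) where
  carrier := Set.range (fun x : ZMod (p ^ r) => (p : ZMod (p ^ r)) ^ i * x)
  add_mem' := by rintro a b ⟨x, rfl⟩ ⟨y, rfl⟩; exact ⟨x + y, by ring⟩
  zero_mem' := ⟨0, by ring⟩
  neg_mem' := by rintro a ⟨x, rfl⟩; exact ⟨-x, by ring⟩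

instance {G : Type*} [AddGroup G] [Finite G] (H : AddSubgroup G) : Fintype (G ⧸ H) :=
  Fintype.ofFinite _

instance {G : Type*} [AddGroup G] [Finite G] (H : AddSubgroup G) : Fintype H :=
  Fintype.ofFinite _

/-- A sequence `x ∈ A^n` is strongly `ε`-typical for the pmf `Q` if each empirical
frequency is within `ε` of `Q a`, and symbols of zero probability never occur. -/
def StronglyTypical {A : Type*} [Fintype A] {n : ℕ} (Q : A → ℝ)
    (x : Fin n → A) (ε : ℝ) : Prop :=
  ∀ a : A,
    |((Finset.univ.filter (fun j => x j = a)).card : ℝ) / n - Q a| ≤ ε ∧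
    (Q a = 0 → (Finset.univ.filter (fun j => x j = a)).card = 0)

section Aux
variable {Ω A B C D : Type*} [Fintype Ω]

lemma distOf_nonneg [Fintype A] {μ : Ω → ℝ} (hμ0 : ∀ ω, 0 ≤ μ ω) (X : Ω → A) (a : A) :
    0 ≤ distOf μ X a := by
  unfold distOf
  apply Finset.sum_nonneg
  intro ω _
  split
  · exact hμ0 ω
  · exact le_rfl

lemma distOf_comp [Fintype A] (μ : Ω → ℝ) (X : Ω → A) (f : A → B) (b : B) :
    distOf μ (fun ω => f (X ω)) b = ∑ a, if f a = b then distOf μ X a else 0 := by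
  unfold distOf
  have h : ∀ a : A, (if f a = b then (∑ ω, if X ω = a then μ ω else 0) else 0)
      = ∑ ω, if X ω = a ∧ f a = b then μ ω else 0 := by
    intro a
    split_ifs with h
    · exact Finset.sum_congr rfl fun ω _ => by simp [h]
    · exact (Finset.sum_eq_zero fun ω _ => by simp [h]).symm
  simp_rw [h]
  rw [Finset.sum_comm]
  refine Finset.sum_congr rfl fun ω _ => ?_
  rw [Finset.sum_eq_single (X ω)]
  · simp
  · intro a _ ha
    simp [Ne.symm ha]
  · simp

lemma distOf_congr (μ : Ω → ℝ) (X X' : Ω → A)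
    (h : ∀ ω, μ ω ≠ 0 → X ω = X' ω) : distOf μ X = distOf μ X' := by
  funext a
  unfold distOf
  refine Finset.sum_congr rfl fun ω _ => ?_
  by_cases hμ : μ ω = 0
  · simp [hμ]
  · rw [h ω hμ]

lemma sum_group_mul [Fintype A] [Fintype D] (q : A → ℝ) (h : A → D) (φ : D → ℝ) :
    ∑ d, (∑ x, if h x = d then q x else 0) * φ d = ∑ x, q x * φ (h x) := by
  simp_rw [Finset.sum_mul, ite_mul, zero_mul]
  rw [Finset.sum_comm]
  refine Finset.sum_congr rfl fun x _ => ?_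
  simp [Finset.sum_ite_eq]

lemma le_group_sum [Fintype A] [Fintype D] (q : A → ℝ) (hq : ∀ x, 0 ≤ q x) (h : A → D) (x : A) :
    q x ≤ ∑ x', if h x' = h x then q x' else 0 := by
  have h1 := Finset.single_le_sum (f := fun x' => if h x' = h x then q x' else 0)
    (fun x' _ => by split; exacts [hq x', le_rfl]) (Finset.mem_univ x)
  simpa using h1

lemma Hent_comp_inj [Fintype A] [Fintype B]
    (μ : Ω → ℝ) (X : Ω → A) (f : A → B) (hf : Function.Injective f) :
    Hent μ (fun ω => f (X ω)) = Hent μ X := by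
  have hQf : ∀ a, distOf μ (fun ω => f (X ω)) (f a) = distOf μ X a := by
    intro a
    rw [distOf_comp]
    simp_rw [hf.eq_iff]
    simp [Finset.sum_ite_eq']
  unfold Hent ent
  congr 1
  calc ∑ b, distOf μ (fun ω => f (X ω)) b * Real.logb 2 (distOf μ (fun ω => f (X ω)) b)
      = ∑ b, (∑ a, if f a = b then distOf μ X a else 0)
          * Real.logb 2 (distOf μ (fun ω => f (X ω)) b) :=
        Finset.sum_congr rfl fun b _ => by rw [distOf_comp]
    _ = ∑ a, distOf μ X a * Real.logb 2 (distOf μ (fun ω => f (X ω)) (f a)) :=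
        sum_group_mul _ _ _
    _ = ∑ a, distOf μ X a * Real.logb 2 (distOf μ X a) :=
        Finset.sum_congr rfl fun a _ => by rw [hQf a]

lemma gibbs {ι : Type*} [Fintype ι] (f u : ι → ℝ) (hf : ∀ i, 0 ≤ f i)
    (hu : ∀ i, 0 ≤ u i) (hpos : ∀ i, 0 < f i → 0 < u i)
    (hsum : ∑ i, u i ≤ ∑ i, f i) :
    ∑ i, f i * Real.log (u i) ≤ ∑ i, f i * Real.log (f i) := by
  have key : ∀ i, f i * Real.log (u i) - f i * Real.log (f i) ≤ u i - f i := by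
    intro i
    rcases (hf i).eq_or_lt with h0 | h0
    · simp [← h0, hu i]
    · have hui := hpos i h0
      have hne : f i ≠ 0 := h0.ne'
      calc f i * Real.log (u i) - f i * Real.log (f i)
          = f i * (Real.log (u i) - Real.log (f i)) := by ring
        _ = f i * Real.log (u i / f i) := by rw [Real.log_div hui.ne' hne]
        _ ≤ f i * (u i / f i - 1) :=
            mul_le_mul_of_nonneg_left (Real.log_le_sub_one_of_pos (div_pos hui h0)) h0.le
        _ = u i - f i := by field_simp
  have h2 := Finset.sum_le_sum (fun i (_ : i ∈ Finset.univ) => key i)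
  rw [Finset.sum_sub_distrib, Finset.sum_sub_distrib] at h2
  linarith

end Aux

section Key
variable {A B C : Type*} [Fintype A] [Fintype B] [Fintype C]

lemma cond_gibbs (g : B → C) (q : A × B → ℝ) (hq : ∀ x, 0 ≤ q x)
    (qB : B → ℝ) (qC : C → ℝ) (qAC : A × C → ℝ)
    (hqB : ∀ b, qB b = ∑ x : A × B, if x.2 = b then q x else 0)
    (hqC : ∀ c, qC c = ∑ x : A × B, if g x.2 = c then q x else 0)
    (hqAC : ∀ y, qAC y = ∑ x : A × B, if (x.1, g x.2) = y then q x else 0) :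
    (∑ b, qB b * Real.log (qB b)) - ∑ x : A × B, q x * Real.log (q x)
    ≤ (∑ c, qC c * Real.log (qC c)) - ∑ y, qAC y * Real.log (qAC y) := by
  have hqB0 : ∀ b, 0 ≤ qB b := fun b => by
    rw [hqB b]
    exact Finset.sum_nonneg fun x _ => by split; exacts [hq x, le_rfl]
  have hqC0 : ∀ c, 0 ≤ qC c := fun c => by
    rw [hqC c]
    exact Finset.sum_nonneg fun x _ => by split; exacts [hq x, le_rfl]
  have hqAC0 : ∀ y, 0 ≤ qAC y := fun y => by
    rw [hqAC y]
    exact Finset.sum_nonneg fun x _ => by split; exacts [hq x, le_rfl]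
  have hleB : ∀ x : A × B, q x ≤ qB x.2 := fun x => by
    rw [hqB]; exact le_group_sum q hq (fun x => x.2) x
  have hleC : ∀ x : A × B, q x ≤ qC (g x.2) := fun x => by
    rw [hqC]; exact le_group_sum q hq (fun x => g x.2) x
  have hleAC : ∀ x : A × B, q x ≤ qAC (x.1, g x.2) := fun x => by
    rw [hqAC]
    have h := le_group_sum q hq (fun x => (x.1, g x.2)) x
    convert h using 3
  have hBC : ∀ b, qB b ≤ qC (g b) := by
    intro b
    rw [hqB, hqC]
    refine Finset.sum_le_sum fun x _ => ?_
    by_cases h : x.2 = b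
    · simp [h]
    · simp only [h, if_false]
      split
      exacts [hq x, le_rfl]
  have hsumAC : ∀ c, ∑ a, qAC (a, c) = qC c := by
    intro c
    simp only [hqAC, hqC]
    rw [Finset.sum_comm]
    refine Finset.sum_congr rfl fun x _ => ?_
    simp_rw [Prod.mk.injEq, ite_and]
    rw [Finset.sum_ite_eq Finset.univ x.1 (fun _ => if g x.2 = c then q x else 0)]
    simp
  set u : A × B → ℝ := fun x => qB x.2 * (qAC (x.1, g x.2) / qC (g x.2)) with hu
  have hu0 : ∀ x, 0 ≤ u x := fun x =>
    mul_nonneg (hqB0 _) (div_nonneg (hqAC0 _) (hqC0 _))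
  have hupos : ∀ x, 0 < q x → 0 < u x := by
    intro x hx
    exact mul_pos (lt_of_lt_of_le hx (hleB x))
      (div_pos (lt_of_lt_of_le hx (hleAC x)) (lt_of_lt_of_le hx (hleC x)))
  have husum : ∑ x, u x = ∑ x, q x := by
    have hB : ∑ b, qB b = ∑ x, q x := by
      have h1 := sum_group_mul q (fun x : A × B => x.2) (fun _ => (1:ℝ))
      simp only [mul_one] at h1
      rw [← h1]
      exact Finset.sum_congr rfl fun b _ => by rw [hqB b]
    rw [← hB, Fintype.sum_prod_type_right]
    refine Finset.sum_congr rfl fun b _ => ?_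
    calc ∑ a, u (a, b) = qB b * ((∑ a, qAC (a, g b)) / qC (g b)) := by
          rw [hu]
          dsimp only
          rw [← Finset.mul_sum, ← Finset.sum_div]
      _ = qB b * (qC (g b) / qC (g b)) := by rw [hsumAC]
      _ = qB b := by
          by_cases hc : qC (g b) = 0
          · have hb0 : qB b = 0 := le_antisymm (hc ▸ hBC b) (hqB0 b)
            simp [hb0]
          · rw [div_self hc, mul_one]
  have hlog : ∀ x : A × B, q x * Real.log (u x)
      = q x * (Real.log (qB x.2) + Real.log (qAC (x.1, g x.2)) - Real.log (qC (g x.2))) := by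
    intro x
    rcases (hq x).eq_or_lt with h0 | h0
    · rw [← h0]; ring
    · have h1 : (0:ℝ) < qB x.2 := lt_of_lt_of_le h0 (hleB x)
      have h2 : (0:ℝ) < qAC (x.1, g x.2) := lt_of_lt_of_le h0 (hleAC x)
      have h3 : (0:ℝ) < qC (g x.2) := lt_of_lt_of_le h0 (hleC x)
      rw [hu]
      dsimp only
      rw [Real.log_mul h1.ne' (div_pos h2 h3).ne', Real.log_div h2.ne' h3.ne']
      ring
  have gB : ∑ b, qB b * Real.log (qB b) = ∑ x : A × B, q x * Real.log (qB x.2) := by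
    simp only [hqB]
    exact sum_group_mul q (fun x : A × B => x.2)
      (fun b => Real.log (∑ x : A × B, if x.2 = b then q x else 0))
  have gC : ∑ c, qC c * Real.log (qC c) = ∑ x : A × B, q x * Real.log (qC (g x.2)) := by
    simp only [hqC]
    exact sum_group_mul q (fun x : A × B => g x.2)
      (fun c => Real.log (∑ x : A × B, if g x.2 = c then q x else 0))
  have gAC : ∑ y, qAC y * Real.log (qAC y)
      = ∑ x : A × B, q x * Real.log (qAC (x.1, g x.2)) := by
    simp only [hqAC]
    have h := sum_group_mul q (fun x : A × B => (x.1, g x.2))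
      (fun y => Real.log (∑ x : A × B, if (x.1, g x.2) = y then q x else 0))
    convert h using 5
  rw [gB, gC, gAC]
  have hgibbs : ∑ x, q x * Real.log (u x) ≤ ∑ x, q x * Real.log (q x) :=
    gibbs q u hq hu0 hupos husum.le
  have hexp : ∑ x, q x * Real.log (u x)
      = ∑ x : A × B, q x * Real.log (qB x.2)
        + ∑ x : A × B, q x * Real.log (qAC (x.1, g x.2))
        - ∑ x : A × B, q x * Real.log (qC (g x.2)) := by
    rw [← Finset.sum_add_distrib, ← Finset.sum_sub_distrib]
    refine Finset.sum_congr rfl fun x _ => ?_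
    rw [hlog x]; ring
  linarith

end Key


section CondLe
variable {Ω A B C : Type*} [Fintype Ω] [Fintype A] [Fintype B] [Fintype C]

lemma ent_eq_div (P : A → ℝ) :
    ent P = (-∑ a, P a * Real.log (P a)) / Real.log 2 := by
  unfold ent
  rw [neg_div, Finset.sum_div]
  congr 1
  refine Finset.sum_congr rfl fun a _ => ?_
  rw [Real.logb, mul_div_assoc]

lemma condEnt_comp_le (μ : Ω → ℝ) (hμ0 : ∀ ω, 0 ≤ μ ω)
    (X : Ω → A) (Y : Ω → B) (g : B → C) :
    condEnt μ X Y ≤ condEnt μ X (fun ω => g (Y ω)) := by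
  have hq0 : ∀ x : A × B, 0 ≤ distOf μ (fun ω => (X ω, Y ω)) x :=
    fun x => distOf_nonneg hμ0 _ x
  have hqB : ∀ b, distOf μ Y b
      = ∑ x : A × B, if x.2 = b then distOf μ (fun ω => (X ω, Y ω)) x else 0 := by
    intro b
    have h := distOf_comp μ (fun ω => (X ω, Y ω)) Prod.snd b
    convert h using 5
  have hqC : ∀ c, distOf μ (fun ω => g (Y ω)) c
      = ∑ x : A × B, if g x.2 = c then distOf μ (fun ω => (X ω, Y ω)) x else 0 := by
    intro c
    have h := distOf_comp μ (fun ω => (X ω, Y ω)) (fun x => g x.2) c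
    convert h using 5
  have hqAC : ∀ y : A × C, distOf μ (fun ω => (X ω, g (Y ω))) y
      = ∑ x : A × B, if (x.1, g x.2) = y then distOf μ (fun ω => (X ω, Y ω)) x else 0 := by
    intro y
    have h := distOf_comp μ (fun ω => (X ω, Y ω)) (fun x => (x.1, g x.2)) y
    convert h using 5
  have key := cond_gibbs g (distOf μ (fun ω => (X ω, Y ω))) hq0
    (distOf μ Y) (distOf μ (fun ω => g (Y ω))) (distOf μ (fun ω => (X ω, g (Y ω))))
    hqB hqC hqAC
  unfold condEnt Hent
  rw [ent_eq_div, ent_eq_div, ent_eq_div, ent_eq_div]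
  rw [← sub_div, ← sub_div]
  have h2 : (0:ℝ) < Real.log 2 := Real.log_pos one_lt_two
  rw [div_le_div_iff_of_pos_right h2]
  linarith

end CondLe

section Main
variable {Ω A Q B : Type*} [Fintype Ω] [Fintype A] [Fintype Q] [Fintype B] [AddGroup A]

lemma main_abstract (μ : Ω → ℝ) (hμ0 : ∀ ω, 0 ≤ μ ω)
    (Z W : Ω → A) (S : Ω → B) (π : A → Q)
    (hπae : ∀ ω, μ ω ≠ 0 → π (Z ω) = π (Z ω + W ω))
    (hsame : distOf μ (fun ω => (Z ω + W ω, S ω)) = distOf μ (fun ω => (Z ω, S ω))) :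
    condEnt μ W (fun ω => (Z ω, S ω)) ≤ condEnt μ Z S - condEnt μ (fun ω => π (Z ω)) S := by
  have e2 : Hent μ (fun ω => (W ω, (Z ω, S ω)))
      = Hent μ (fun ω => (Z ω + W ω, (Z ω, S ω))) := by
    have hf : Function.Injective (fun x : A × (A × B) => (x.2.1 + x.1, x.2)) := by
      intro x y h
      simp only [Prod.mk.injEq] at h
      obtain ⟨h1, h2⟩ := h
      have h3 : x.1 = y.1 := by
        rw [h2] at h1
        exact add_left_cancel h1
      exact Prod.ext h3 h2
    exact (Hent_comp_inj μ (fun ω => (W ω, (Z ω, S ω))) _ hf).symm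
  have e3 : condEnt μ (fun ω => Z ω + W ω) (fun ω => (Z ω, S ω))
      ≤ condEnt μ (fun ω => Z ω + W ω) (fun ω => (π (Z ω), S ω)) :=
    condEnt_comp_le μ hμ0 _ (fun ω => (Z ω, S ω)) (fun y => (π y.1, y.2))
  have d4a : distOf μ (fun ω => (Z ω + W ω, (π (Z ω), S ω)))
      = distOf μ (fun ω => (Z ω + W ω, (π (Z ω + W ω), S ω))) :=
    distOf_congr μ _ _ (fun ω h => by rw [hπae ω h])
  have e5 : Hent μ (fun ω => (Z ω + W ω, (π (Z ω + W ω), S ω)))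
      = Hent μ (fun ω => (Z ω + W ω, S ω)) := by
    have hf : Function.Injective (fun y : A × B => (y.1, (π y.1, y.2))) := by
      intro x y h
      simp only [Prod.mk.injEq] at h
      exact Prod.ext h.1 h.2.2
    exact Hent_comp_inj μ (fun ω => (Z ω + W ω, S ω)) _ hf
  have h3 : Hent μ (fun ω => (Z ω + W ω, S ω)) = Hent μ (fun ω => (Z ω, S ω)) := by
    unfold Hent; rw [hsame]
  have key : Hent μ (fun ω => (Z ω + W ω, (π (Z ω), S ω)))
      = Hent μ (fun ω => (Z ω, S ω)) := by
    have h1 : Hent μ (fun ω => (Z ω + W ω, (π (Z ω), S ω)))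
        = Hent μ (fun ω => (Z ω + W ω, (π (Z ω + W ω), S ω))) := by
      unfold Hent; rw [d4a]
    rw [h1, e5, h3]
  have lhs_eq : condEnt μ W (fun ω => (Z ω, S ω))
      = Hent μ (fun ω => (Z ω + W ω, (Z ω, S ω))) - Hent μ (fun ω => (Z ω, S ω)) := by
    unfold condEnt
    rw [e2]
  rw [lhs_eq]
  calc Hent μ (fun ω => (Z ω + W ω, (Z ω, S ω))) - Hent μ (fun ω => (Z ω, S ω))
      = condEnt μ (fun ω => Z ω + W ω) (fun ω => (Z ω, S ω)) := rfl
    _ ≤ condEnt μ (fun ω => Z ω + W ω) (fun ω => (π (Z ω), S ω)) := e3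
    _ = Hent μ (fun ω => (Z ω + W ω, (π (Z ω), S ω)))
        - Hent μ (fun ω => (π (Z ω), S ω)) := rfl
    _ = Hent μ (fun ω => (Z ω, S ω)) - Hent μ (fun ω => (π (Z ω), S ω)) := by rw [key]
    _ = condEnt μ Z S - condEnt μ (fun ω => π (Z ω)) S := by unfold condEnt; ring

end Main

theorem stmt7 (p r i : ℕ) (hp : p.Prime) (hr : 1 ≤ r) (hi : i ≤ r) [NeZero (p ^ r)]
    {Ω 𝒮 : Type*} [Fintype Ω] [Fintype 𝒮]
    (μ : Ω → ℝ) (hμ0 : ∀ ω, 0 ≤ μ ω) (hμ1 : ∑ ω, μ ω = 1)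
    (Z W : Ω → ZMod (p ^ r)) (S : Ω → 𝒮)
    (hW : ∀ ω, μ ω ≠ 0 → W ω ∈ pZ p r i)
    (hsame : distOf μ (fun ω => (Z ω + W ω, S ω)) = distOf μ (fun ω => (Z ω, S ω))) :
    condEnt μ W (fun ω => (Z ω, S ω)) ≤
      condEnt μ Z S -
        condEnt μ (fun ω => ((QuotientAddGroup.mk (Z ω)) : ZMod (p ^ r) ⧸ pZ p r i)) S := by
  refine main_abstract μ hμ0 Z W S
    (fun z => ((QuotientAddGroup.mk z) : ZMod (p ^ r) ⧸ pZ p r i)) ?_ hsame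
  intro ω h
  have hw := hW ω h
  have hmem : -(Z ω) + (Z ω + W ω) ∈ pZ p r i := by simpa using hw
  exact (QuotientAddGroup.eq).mpr hmem

end
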